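/- Let D ⊂ ℝ^d be compact and convex and ν a probability measure on D absolutely continuous with respect to Lebesgue measure. Let (ε_N) ⊂ ℝ₊ with ε_N → 0, and let (X^N, g^N) be tuples of n pairwise distinct sites and weights converging to (X, g) where X is a tuple of pairwise distinct sites. Then, for each i, χ_i^{ε_N}[X^N, g^N] converges in L¹(ν) to the indicator function χ_{L_i[X,g]} of the Laguerre cell. -/

import Mathlib

open MeasureTheory Set Filter Topology
open scoped ENNReal NNReal

noncomputable section

/-- Euclidean space `ℝ^d`. -/
abbrev Euc (d : ℕ) : Type := EuclideanSpace ℝ (Fin d)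

/-- `ρ ⪯ μ` in the convex order: `∫ ψ dρ ≤ ∫ ψ dμ` for every convex function `ψ` for which
both integrals exist. -/
def ConvexOrderLE {d : ℕ} (ρ μ : Measure (Euc d)) : Prop :=
  ∀ ψ : Euc d → ℝ, ConvexOn ℝ Set.univ ψ → Integrable ψ μ → Integrable ψ ρ →
    ∫ x, ψ x ∂ρ ≤ ∫ x, ψ x ∂μ

/-- The set of fusions of `ν`: probability measures supported on `D` that are dominated by `ν`
in the convex order. -/
def fusions {d : ℕ} (D : Set (Euc d)) (ν : Measure (Euc d)) : Set (Measure (Euc d)) :=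
  {ρ | IsProbabilityMeasure ρ ∧ ρ Dᶜ = 0 ∧ ConvexOrderLE ρ ν}

/-- The (topological) support of a measure. -/
def msupport {d : ℕ} (ρ : Measure (Euc d)) : Set (Euc d) := {x | ∀ U ∈ nhds x, ρ U ≠ 0}

/-- Laguerre cell of site `x_i` with weight `g_i` inside the domain `D`. -/
def LaguerreCell {d n : ℕ} (D : Set (Euc d)) (X : Fin n → Euc d) (g : Fin n → ℝ)
    (i : Fin n) : Set (Euc d) :=
  {y ∈ D | ∀ j, ‖y - X i‖ ^ 2 - g i ≤ ‖y - X j‖ ^ 2 - g j}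

/-- ν-mass of the `i`-th Laguerre cell. -/
def cellMass {d n : ℕ} (D : Set (Euc d)) (ν : Measure (Euc d)) (X : Fin n → Euc d)
    (g : Fin n → ℝ) (i : Fin n) : ℝ :=
  (ν (LaguerreCell D X g i)).toReal

/-- ν-barycenter of the `i`-th Laguerre cell. -/
def cellBary {d n : ℕ} (D : Set (Euc d)) (ν : Measure (Euc d)) (X : Fin n → Euc d)
    (g : Fin n → ℝ) (i : Fin n) : Euc d :=
  (cellMass D ν X g i)⁻¹ • ∫ y in LaguerreCell D X g i, y ∂ν

/-- Entropy-regularized cell function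
`χ_i^ε[X,g](y) = exp((g_i − |y−x_i|²)/ε) / Σ_j exp((g_j − |y−x_j|²)/ε)`. -/
def chiEps {d n : ℕ} (X : Fin n → Euc d) (g : Fin n → ℝ) (ε : ℝ) (i : Fin n)
    (y : Euc d) : ℝ :=
  Real.exp ((g i - ‖y - X i‖ ^ 2) / ε) / ∑ j, Real.exp ((g j - ‖y - X j‖ ^ 2) / ε)

/-- Regularized mass `m_i^ε[X,g] = ∫ χ_i^ε[X,g] dν`. -/
def mEps {d n : ℕ} (ν : Measure (Euc d)) (X : Fin n → Euc d) (g : Fin n → ℝ) (ε : ℝ)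
    (i : Fin n) : ℝ :=
  ∫ y, chiEps X g ε i y ∂ν

/-- Regularized barycenter `b_i^ε[X,g] = (m_i^ε)⁻¹ ∫ y χ_i^ε[X,g](y) dν(y)`. -/
def bEps {d n : ℕ} (ν : Measure (Euc d)) (X : Fin n → Euc d) (g : Fin n → ℝ) (ε : ℝ)
    (i : Fin n) : Euc d :=
  (mEps ν X g ε i)⁻¹ • ∫ y, chiEps X g ε i y • y ∂ν


/-! ### Auxiliary lemmas -/

lemma hyperplane_null {d : ℕ} (v : Euc d) (hv : v ≠ 0) (c : ℝ) :
    volume {y : Euc d | (inner ℝ v y : ℝ) = c} = 0 := by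
  set f : Euc d →ₗ[ℝ] ℝ := (innerSL ℝ v).toLinearMap with hf
  have hfv : f v = ‖v‖ ^ 2 := real_inner_self_eq_norm_sq v
  have hv2 : ‖v‖ ^ 2 ≠ 0 := pow_ne_zero _ (norm_ne_zero_iff.mpr hv)
  have hfv0 : f v ≠ 0 := by rw [hfv]; exact hv2
  have hker : LinearMap.ker f ≠ ⊤ := by
    intro h
    exact hfv0 (by simpa using (h ▸ (Submodule.mem_top : v ∈ ⊤) : v ∈ LinearMap.ker f))
  set y₀ : Euc d := (c / ‖v‖ ^ 2) • v with hy₀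
  have hfy₀ : f y₀ = c := by
    show (inner ℝ v y₀ : ℝ) = c
    rw [hy₀, real_inner_smul_right, real_inner_self_eq_norm_sq, div_mul_cancel₀ c hv2]
  set S : AffineSubspace ℝ (Euc d) := AffineSubspace.mk' y₀ (LinearMap.ker f) with hS
  have hset : {y : Euc d | (inner ℝ v y : ℝ) = c} = (S : Set (Euc d)) := by
    ext y
    simp only [mem_setOf_eq, hS, SetLike.mem_coe, AffineSubspace.mem_mk',
      LinearMap.mem_ker, vsub_eq_sub]
    have : f (y - y₀) = (inner ℝ v y : ℝ) - c := by
      simp [map_sub, hfy₀]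
      rfl
    rw [this]
    constructor <;> intro h <;> linarith
  rw [hset]
  refine Measure.addHaar_affineSubspace volume S ?_
  intro h
  apply hker
  have := AffineSubspace.direction_mk' y₀ (LinearMap.ker f)
  rw [← hS, h, AffineSubspace.direction_top] at this
  exact this.symm

lemma tie_null {d : ℕ} (p q : Euc d) (hpq : p ≠ q) (c : ℝ) :
    volume {y : Euc d | ‖y - p‖ ^ 2 - ‖y - q‖ ^ 2 = c} = 0 := by
  have hv : q - p ≠ 0 := sub_ne_zero.mpr hpq.symm
  have hset : {y : Euc d | ‖y - p‖ ^ 2 - ‖y - q‖ ^ 2 = c}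
      = {y : Euc d | (inner ℝ (q - p) y : ℝ) = (c - ‖p‖ ^ 2 + ‖q‖ ^ 2) / 2} := by
    ext y
    simp only [mem_setOf_eq]
    have h1 : ‖y - p‖ ^ 2 = ‖y‖ ^ 2 - 2 * (inner ℝ y p : ℝ) + ‖p‖ ^ 2 := norm_sub_sq_real y p
    have h2 : ‖y - q‖ ^ 2 = ‖y‖ ^ 2 - 2 * (inner ℝ y q : ℝ) + ‖q‖ ^ 2 := norm_sub_sq_real y q
    have h3 : (inner ℝ (q - p) y : ℝ) = (inner ℝ y q : ℝ) - (inner ℝ y p : ℝ) := by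
      rw [inner_sub_left, real_inner_comm q y, real_inner_comm p y]
    rw [h1, h2, h3]
    constructor <;> intro h <;> linarith
  rw [hset]
  exact hyperplane_null _ hv _

lemma denom_pos {d n : ℕ} (X : Fin n → Euc d) (g : Fin n → ℝ) (ε : ℝ) (i : Fin n)
    (y : Euc d) : 0 < ∑ j, Real.exp ((g j - ‖y - X j‖ ^ 2) / ε) :=
  Finset.sum_pos' (fun _ _ => (Real.exp_pos _).le) ⟨i, Finset.mem_univ i, Real.exp_pos _⟩

lemma chiEps_nonneg {d n : ℕ} (X : Fin n → Euc d) (g : Fin n → ℝ) (ε : ℝ) (i : Fin n)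
    (y : Euc d) : 0 ≤ chiEps X g ε i y :=
  div_nonneg (Real.exp_pos _).le (denom_pos X g ε i y).le

lemma chiEps_le_one {d n : ℕ} (X : Fin n → Euc d) (g : Fin n → ℝ) (ε : ℝ) (i : Fin n)
    (y : Euc d) : chiEps X g ε i y ≤ 1 := by
  rw [chiEps, div_le_one (denom_pos X g ε i y)]
  exact Finset.single_le_sum (f := fun j => Real.exp ((g j - ‖y - X j‖ ^ 2) / ε))
    (fun j _ => (Real.exp_pos _).le) (Finset.mem_univ i)

lemma chiEps_continuous {d n : ℕ} (X : Fin n → Euc d) (g : Fin n → ℝ) (ε : ℝ) (i : Fin n) :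
    Continuous (chiEps X g ε i) := by
  have hc : ∀ j : Fin n, Continuous fun y : Euc d =>
      Real.exp ((g j - ‖y - X j‖ ^ 2) / ε) := fun j =>
    Real.continuous_exp.comp
      ((continuous_const.sub ((continuous_id.sub continuous_const).norm.pow 2)).div_const ε)
  exact (hc i).div (continuous_finset_sum _ fun j _ => hc j)
    (fun y => (denom_pos X g ε i y).ne')

lemma exp_ratio_tendsto (u : ℕ → ℝ) (c : ℝ) (hc : c < 0) (hu : Tendsto u atTop (𝓝 c))
    (ε : ℕ → ℝ) (hεpos : ∀ N, 0 < ε N) (hε : Tendsto ε atTop (𝓝 0)) :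
    Tendsto (fun N => Real.exp (u N / ε N)) atTop (𝓝 0) := by
  have hbot : Tendsto (fun N => u N / ε N) atTop atBot := by
    have hεinv : Tendsto (fun N => (ε N)⁻¹) atTop atTop :=
      tendsto_inv_nhdsGT_zero.comp
        (tendsto_nhdsWithin_iff.mpr ⟨hε, Eventually.of_forall fun N => hεpos N⟩)
    have h2 : Tendsto (fun N => (c / 2) * (ε N)⁻¹) atTop atBot :=
      hεinv.const_mul_atTop_of_neg (by linarith)
    refine tendsto_atBot_mono' _ ?_ h2
    filter_upwards [hu.eventually (eventually_le_nhds (by linarith : c < c / 2))] with N hN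
    calc u N / ε N ≤ (c / 2) / ε N := by
          exact div_le_div_of_nonneg_right hN (hεpos N).le |>.trans_eq rfl
      _ = (c / 2) * (ε N)⁻¹ := div_eq_mul_inv _ _
  exact Real.tendsto_exp_atBot.comp hbot

lemma chi_pointwise {d n : ℕ}
    (XN : ℕ → Fin n → Euc d) (gN : ℕ → Fin n → ℝ) (ε : ℕ → ℝ)
    (hεpos : ∀ N, 0 < ε N) (hε : Tendsto ε atTop (𝓝 0))
    (X : Fin n → Euc d) (g : Fin n → ℝ)
    (hXconv : ∀ i, Tendsto (fun N => XN N i) atTop (𝓝 (X i)))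
    (hgconv : ∀ i, Tendsto (fun N => gN N i) atTop (𝓝 (g i)))
    (y : Euc d) (i j₀ : Fin n)
    (hmax : ∀ j, j ≠ j₀ → g j - ‖y - X j‖ ^ 2 < g j₀ - ‖y - X j₀‖ ^ 2) :
    Tendsto (fun N => chiEps (XN N) (gN N) (ε N) i y) atTop
      (𝓝 (if i = j₀ then 1 else 0)) := by
  set aN : ℕ → Fin n → ℝ := fun N j => gN N j - ‖y - XN N j‖ ^ 2 with haN
  set a : Fin n → ℝ := fun j => g j - ‖y - X j‖ ^ 2 with ha
  have haconv : ∀ j, Tendsto (fun N => aN N j) atTop (𝓝 (a j)) := by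
    intro j
    exact (hgconv j).sub (((tendsto_const_nhds.sub (hXconv j)).norm).pow 2)
  by_cases hij : i = j₀
  · subst hij
    simp only [if_pos rfl]
    have key : ∀ N, chiEps (XN N) (gN N) (ε N) i y
        = (∑ j, Real.exp ((aN N j - aN N i) / ε N))⁻¹ := by
      intro N
      simp only [sub_div, Real.exp_sub]
      rw [← Finset.sum_div, inv_div]
      rfl
    simp only [key]
    have hsum : Tendsto (fun N => ∑ j, Real.exp ((aN N j - aN N i) / ε N)) atTop
        (𝓝 (∑ j : Fin n, if j = i then 1 else 0)) := by
      refine tendsto_finset_sum _ fun j _ => ?_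
      by_cases hji : j = i
      · subst hji
        simp only [if_pos rfl, sub_self, zero_div, Real.exp_zero]
        exact tendsto_const_nhds
      · simp only [if_neg hji]
        exact exp_ratio_tendsto _ (a j - a i)
          (sub_neg.mpr (hmax j hji)) ((haconv j).sub (haconv i)) ε hεpos hε
    have hone : (∑ j : Fin n, if j = i then (1:ℝ) else 0) = 1 := by simp
    rw [hone] at hsum
    simpa using hsum.inv₀ one_ne_zero
  · simp only [if_neg hij]
    have hbound : ∀ N, chiEps (XN N) (gN N) (ε N) i y
        ≤ Real.exp ((aN N i - aN N j₀) / ε N) := by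
      intro N
      rw [chiEps]
      calc Real.exp ((gN N i - ‖y - XN N i‖ ^ 2) / ε N) /
            ∑ j, Real.exp ((gN N j - ‖y - XN N j‖ ^ 2) / ε N)
          ≤ Real.exp ((gN N i - ‖y - XN N i‖ ^ 2) / ε N) /
            Real.exp ((gN N j₀ - ‖y - XN N j₀‖ ^ 2) / ε N) := by
            gcongr
            · exact Finset.single_le_sum
                (f := fun j => Real.exp ((gN N j - ‖y - XN N j‖ ^ 2) / ε N))
                (fun j _ => (Real.exp_pos _).le) (Finset.mem_univ j₀)
        _ = Real.exp ((aN N i - aN N j₀) / ε N) := by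
            rw [← Real.exp_sub, ← sub_div]
    have hup : Tendsto (fun N => Real.exp ((aN N i - aN N j₀) / ε N)) atTop (𝓝 0) :=
      exp_ratio_tendsto _ (a i - a j₀) (sub_neg.mpr (hmax i hij))
        ((haconv i).sub (haconv j₀)) ε hεpos hε
    exact tendsto_of_tendsto_of_tendsto_of_le_of_le tendsto_const_nhds hup
      (fun N => chiEps_nonneg _ _ _ _ _) hbound

lemma laguerre_measurable {d n : ℕ} (D : Set (Euc d)) (hD : IsCompact D)
    (X : Fin n → Euc d) (g : Fin n → ℝ) (i : Fin n) :
    MeasurableSet (LaguerreCell D X g i) := by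
  have heq : LaguerreCell D X g i
      = D ∩ ⋂ j, {y | ‖y - X i‖ ^ 2 - g i ≤ ‖y - X j‖ ^ 2 - g j} := by
    ext y; simp [LaguerreCell, Set.mem_iInter]
  rw [heq]
  refine (hD.isClosed.inter (isClosed_iInter fun j => ?_)).measurableSet
  exact isClosed_le (((continuous_id.sub continuous_const).norm.pow 2).sub continuous_const)
    (((continuous_id.sub continuous_const).norm.pow 2).sub continuous_const)

/-- Proposition on joint convergence: if `ε_N → 0`, `ε_N > 0`, and
`(X^N, g^N) → (X, g)` with all tuples of pairwise distinct sites, then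
`χ_i^{ε_N}[X^N, g^N] → χ_{L_i[X,g]}` in `L¹(ν)` for every `i`. -/
theorem chiEps_L1_convergence_of_tendsto
    {d : ℕ} (D : Set (Euc d)) (hD : IsCompact D) (hDconv : Convex ℝ D)
    (ν : Measure (Euc d)) [IsProbabilityMeasure ν] (hνD : ν Dᶜ = 0)
    (hac : ν ≪ (volume : Measure (Euc d)))
    {n : ℕ} (hn : 0 < n)
    (ε : ℕ → ℝ) (hεpos : ∀ N, 0 < ε N) (hε : Tendsto ε atTop (𝓝 0))
    (XN : ℕ → Fin n → Euc d) (gN : ℕ → Fin n → ℝ)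
    (hXN : ∀ N, Function.Injective (XN N))
    (X : Fin n → Euc d) (hX : Function.Injective X) (g : Fin n → ℝ)
    (hXconv : ∀ i, Tendsto (fun N => XN N i) atTop (𝓝 (X i)))
    (hgconv : ∀ i, Tendsto (fun N => gN N i) atTop (𝓝 (g i))) :
    ∀ i, Tendsto
      (fun N => ∫ y,
        |chiEps (XN N) (gN N) (ε N) i y -
          (LaguerreCell D X g i).indicator (1 : Euc d → ℝ) y| ∂ν)
      atTop (𝓝 0) := by
  intro i
  set B : Set (Euc d) := Dᶜ ∪ ⋃ (j : Fin n) (k : Fin n) (_ : j ≠ k),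
      {y : Euc d | ‖y - X j‖ ^ 2 - ‖y - X k‖ ^ 2 = g j - g k} with hB
  have hBnull : ν B = 0 := by
    refine measure_union_null hνD ?_
    refine measure_iUnion_null fun j => measure_iUnion_null fun k =>
      measure_iUnion_null fun hjk => hac (tie_null _ _ (fun h => hjk (hX h)) _)
  have hae : ∀ᵐ y ∂ν, y ∈ D ∧ ∀ j k : Fin n, j ≠ k →
      g j - ‖y - X j‖ ^ 2 ≠ g k - ‖y - X k‖ ^ 2 := by
    have := measure_eq_zero_iff_ae_notMem.mp hBnull
    filter_upwards [this] with y hy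
    simp only [hB, mem_union, mem_compl_iff, mem_iUnion, mem_setOf_eq, not_or,
      not_exists] at hy
    refine ⟨not_not.mp hy.1, fun j k hjk h => hy.2 j k hjk ?_⟩
    linarith
  have hlim : ∀ᵐ y ∂ν, Tendsto (fun N => |chiEps (XN N) (gN N) (ε N) i y -
      (LaguerreCell D X g i).indicator (1 : Euc d → ℝ) y|) atTop (𝓝 0) := by
    filter_upwards [hae] with y hy
    obtain ⟨hyD, hdist⟩ := hy
    have : Nonempty (Fin n) := ⟨⟨0, hn⟩⟩
    obtain ⟨j₀, -, hj₀⟩ := Finset.exists_max_image Finset.univ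
      (fun j => g j - ‖y - X j‖ ^ 2) Finset.univ_nonempty
    have hmax : ∀ j, j ≠ j₀ → g j - ‖y - X j‖ ^ 2 < g j₀ - ‖y - X j₀‖ ^ 2 :=
      fun j hj => lt_of_le_of_ne (hj₀ j (Finset.mem_univ j)) (hdist j j₀ hj)
    have hpt := chi_pointwise XN gN ε hεpos hε X g hXconv hgconv y i j₀ hmax
    by_cases hij : i = j₀
    · subst hij
      have hmem : y ∈ LaguerreCell D X g i := by
        refine ⟨hyD, fun j => ?_⟩
        have := hj₀ j (Finset.mem_univ j)
        linarith
      rw [Set.indicator_of_mem hmem]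
      simp only [if_pos rfl] at hpt
      have := (hpt.sub_const 1).abs
      simpa using this
    · have hnmem : y ∉ LaguerreCell D X g i := by
        intro hmem
        have h1 := hmem.2 j₀
        have h2 := hmax i hij
        linarith
      rw [Set.indicator_of_notMem hnmem]
      simp only [if_neg hij] at hpt
      have := (hpt.sub_const 0).abs
      simpa using this
  have hν0 : (𝓝 (0:ℝ)) = 𝓝 (∫ (_ : Euc d), (0:ℝ) ∂ν) := by simp
  rw [hν0]
  refine tendsto_integral_of_dominated_convergence (fun _ => (1:ℝ))
    (fun N => ?_) (integrable_const 1) (fun N => ?_) ?_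
  · exact ((chiEps_continuous (XN N) (gN N) (ε N) i).measurable.sub
      (measurable_one.indicator (laguerre_measurable D hD X g i))).abs.aestronglyMeasurable
  · filter_upwards with y
    rw [Real.norm_eq_abs, abs_abs, abs_sub_le_iff]
    have h1 := chiEps_nonneg (XN N) (gN N) (ε N) i y
    have h2 := chiEps_le_one (XN N) (gN N) (ε N) i y
    by_cases hy : y ∈ LaguerreCell D X g i
    · rw [Set.indicator_of_mem hy]; constructor <;> simp <;> linarith
    · rw [Set.indicator_of_notMem hy]; constructor <;> simp <;> linarith
  · simpa using hlim
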